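/- There exists an absolute constant c > 0 such that for all integers n ≥ k ≥ 2 there exists an (n, k)-universal set T ⊆ {0,1}^n with |T| ≤ 2^k · k^{c · log₂ k} · log₂ n. -/

import Mathlib

open Finset

/-- Key inequality: `2 * (t-1)^t ≤ t^t` for `t ≥ 1`. -/
lemma two_mul_pred_pow_le (t : ℕ) (ht : 1 ≤ t) : 2 * (t - 1) ^ t ≤ t ^ t := by
  rcases eq_or_lt_of_le ht with h | h
  · simp [← h]
  · -- t ≥ 2
    have ht2 : 2 ≤ t := h
    have hx : (1:ℝ) ≤ (t:ℝ) - 1 := by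
      have : (2:ℝ) ≤ (t:ℝ) := by exact_mod_cast ht2
      linarith
    have hx0 : (0:ℝ) < (t:ℝ) - 1 := by linarith
    set x : ℝ := (t:ℝ) - 1 with hxdef
    have ha : (-2:ℝ) ≤ 1 / x := by
      have : (0:ℝ) ≤ 1 / x := by positivity
      linarith
    have hbern : 1 + (t:ℝ) * (1 / x) ≤ (1 + 1 / x) ^ t := one_add_mul_le_pow ha t
    have h2 : (2:ℝ) ≤ (1 + 1 / x) ^ t := by
      have : (1:ℝ) ≤ (t:ℝ) * (1 / x) := by
        rw [mul_one_div, le_div_iff₀ hx0]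
        linarith
      linarith
    have hmul : (2:ℝ) * x ^ t ≤ ((1 + 1 / x) * x) ^ t := by
      rw [mul_pow]
      have hxt : (0:ℝ) ≤ x ^ t := by positivity
      nlinarith [pow_nonneg hx0.le t]
    have hxx : (1 + 1 / x) * x = (t:ℝ) := by
      field_simp
      rw [hxdef]; ring
    rw [hxx] at hmul
    have hcast : ((t - 1 : ℕ) : ℝ) = x := by
      push_cast [Nat.cast_sub ht]
      ring
    have : (2:ℝ) * ((t-1:ℕ):ℝ) ^ t ≤ ((t:ℕ):ℝ) ^ t := by rw [hcast]; exact hmul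
    exact_mod_cast this

lemma pow_ineq (a t s : ℕ) (ht : 1 ≤ t) :
    2 ^ s * (a * (t - 1)) ^ (t * s) ≤ (a * t) ^ (t * s) := by
  have key : (2 * (t - 1) ^ t) ^ s ≤ (t ^ t) ^ s :=
    Nat.pow_le_pow_left (two_mul_pred_pow_le t ht) s
  calc 2 ^ s * (a * (t - 1)) ^ (t * s)
      = a ^ (t * s) * ((2 * (t-1)^t) ^ s) := by ring
    _ ≤ a ^ (t * s) * ((t ^ t) ^ s) := Nat.mul_le_mul_left _ key
    _ = (a * t) ^ (t * s) := by rw [mul_pow, ← pow_mul]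

/-- Probabilistic (counting) existence of a covering tuple. -/
lemma exists_cover (n k : ℕ) (hk : 2 ≤ k) (hkn : k ≤ n) :
    ∃ v : Fin (2 ^ k * (k * Nat.clog 2 n + k + 1)) → (Fin n → Bool),
      ∀ S : Finset (Fin n), S.card = k → ∀ f : Fin n → Bool,
        ∃ j, ∀ i ∈ S, v j i = f i := by
  classical
  set L := Nat.clog 2 n with hL
  set s := k * L + k + 1 with hs
  set m := 2 ^ k * s with hm
  by_contra hcon
  push_neg at hcon
  -- for every v there is a bad pair (S, f)
  set A : Finset (Fin n) → (Fin n → Bool) → Finset (Fin n → Bool) :=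
    fun S g => Fintype.piFinset (fun i => if i ∈ S then ({g i} : Finset Bool) else Finset.univ)
    with hA
  set Bad : Finset (Fin n) → (Fin n → Bool) → Finset (Fin m → Fin n → Bool) :=
    fun S g => Fintype.piFinset (fun _ : Fin m => (A S g)ᶜ) with hBad
  set D : Finset (Fin n) → Finset (Fin n → Bool) :=
    fun S => Fintype.piFinset (fun i => if i ∈ S then (Finset.univ : Finset Bool) else {false})
    with hD
  have hsub : (Finset.univ : Finset (Fin m → Fin n → Bool)) ⊆
      (Finset.powersetCard k Finset.univ).biUnion (fun S => (D S).biUnion (fun g => Bad S g)) := by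
    intro v _
    obtain ⟨S, hScard, f, hbad⟩ := hcon v
    refine Finset.mem_biUnion.2 ⟨S, ?_, ?_⟩
    · exact Finset.mem_powersetCard_univ.2 hScard
    refine Finset.mem_biUnion.2 ⟨fun i => if i ∈ S then f i else false, ?_, ?_⟩
    · refine Fintype.mem_piFinset.2 fun i => ?_
      by_cases hi : i ∈ S <;> simp [hi]
    · refine Fintype.mem_piFinset.2 fun j => ?_
      rw [Finset.mem_compl]
      intro hmem
      obtain ⟨i, hiS, hne⟩ := hbad j
      have := Fintype.mem_piFinset.1 hmem i
      rw [if_pos hiS] at this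
      simp only [Finset.mem_singleton, if_pos hiS] at this
      exact hne this
  -- cardinalities
  have hcardA : ∀ S : Finset (Fin n), S.card = k → ∀ g, (A S g).card = 2 ^ (n - k) := by
    intro S hScard g
    rw [hA]
    rw [Fintype.card_piFinset]
    have : ∀ i : Fin n, (if i ∈ S then ({g i} : Finset Bool) else Finset.univ).card
        = if i ∈ S then 1 else 2 := by
      intro i; by_cases hi : i ∈ S <;> simp [hi]
    rw [Finset.prod_congr rfl (fun i _ => this i)]
    rw [← Finset.prod_sdiff (Finset.subset_univ S)]
    have h1 : ∏ i ∈ S, (if i ∈ S then 1 else 2) = 1 :=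
      Finset.prod_eq_one fun i hi => by rw [if_pos hi]
    have h2 : ∏ i ∈ Finset.univ \ S, (if i ∈ S then 1 else 2) = 2 ^ (n - k) := by
      rw [Finset.prod_congr rfl (fun i hi => by
        rw [if_neg (Finset.mem_sdiff.1 hi).2]), Finset.prod_const]
      congr 1
      rw [Finset.card_sdiff_of_subset (Finset.subset_univ S), hScard, Finset.card_univ, Fintype.card_fin]
    rw [h1, h2, mul_one]
  have hcardD : ∀ S : Finset (Fin n), S.card = k → (D S).card = 2 ^ k := by
    intro S hScard
    rw [hD, Fintype.card_piFinset]
    have : ∀ i : Fin n, (if i ∈ S then (Finset.univ : Finset Bool) else {false}).card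
        = if i ∈ S then 2 else 1 := by
      intro i; by_cases hi : i ∈ S <;> simp [hi]
    rw [Finset.prod_congr rfl (fun i _ => this i)]
    rw [← Finset.prod_sdiff (Finset.subset_univ S)]
    have h1 : ∏ i ∈ S, (if i ∈ S then 2 else 1) = 2 ^ k := by
      rw [Finset.prod_congr rfl (fun i hi => by rw [if_pos hi]), Finset.prod_const, hScard]
    have h2 : ∏ i ∈ Finset.univ \ S, (if i ∈ S then 2 else 1) = 1 :=
      Finset.prod_eq_one fun i hi => by rw [if_neg (Finset.mem_sdiff.1 hi).2]
    rw [h1, h2, one_mul]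
  have hcardBad : ∀ S : Finset (Fin n), S.card = k → ∀ g,
      (Bad S g).card = (2 ^ n - 2 ^ (n - k)) ^ m := by
    intro S hScard g
    rw [hBad, Fintype.card_piFinset, Finset.prod_const, Finset.card_univ, Fintype.card_fin]
    congr 1
    rw [Finset.card_compl, hcardA S hScard g]
    congr 1
    rw [Fintype.card_fun, Fintype.card_bool, Fintype.card_fin]
  -- total cardinality
  have htotal : (Finset.univ : Finset (Fin m → Fin n → Bool)).card = (2 ^ n) ^ m := by
    rw [Finset.card_univ, Fintype.card_fun, Fintype.card_fun, Fintype.card_bool,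
      Fintype.card_fin, Fintype.card_fin]
  have hle : (2 ^ n) ^ m ≤ n.choose k * (2 ^ k * (2 ^ n - 2 ^ (n - k)) ^ m) := by
    calc (2 ^ n) ^ m = (Finset.univ : Finset (Fin m → Fin n → Bool)).card := htotal.symm
      _ ≤ ((Finset.powersetCard k Finset.univ).biUnion
            (fun S => (D S).biUnion (fun g => Bad S g))).card := Finset.card_le_card hsub
      _ ≤ ∑ S ∈ Finset.powersetCard k Finset.univ, ((D S).biUnion (fun g => Bad S g)).card :=
          Finset.card_biUnion_le
      _ ≤ ∑ S ∈ Finset.powersetCard k Finset.univ, ∑ g ∈ D S, (Bad S g).card := by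
          refine Finset.sum_le_sum fun S _ => Finset.card_biUnion_le
      _ ≤ ∑ S ∈ Finset.powersetCard k Finset.univ, (2 ^ k * (2 ^ n - 2 ^ (n - k)) ^ m) := by
          refine Finset.sum_le_sum fun S hS => ?_
          have hScard : S.card = k := (Finset.mem_powersetCard_univ.1 hS)
          rw [Finset.sum_congr rfl (fun g _ => hcardBad S hScard g), Finset.sum_const,
            hcardD S hScard, smul_eq_mul]
      _ = n.choose k * (2 ^ k * (2 ^ n - 2 ^ (n - k)) ^ m) := by
          rw [Finset.sum_const, Finset.card_powersetCard, Finset.card_univ, Fintype.card_fin,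
            smul_eq_mul]
  -- numeric contradiction
  have hlt : n.choose k * (2 ^ k * (2 ^ n - 2 ^ (n - k)) ^ m) < (2 ^ n) ^ m := by
    have h2n : 2 ^ n = 2 ^ (n - k) * 2 ^ k := by
      rw [← pow_add, Nat.sub_add_cancel hkn]
    have hsub' : 2 ^ n - 2 ^ (n - k) = 2 ^ (n - k) * (2 ^ k - 1) := by
      rw [h2n, Nat.mul_sub, mul_one]
    have hB : 2 ^ s * (2 ^ (n - k) * (2 ^ k - 1)) ^ (2 ^ k * s)
        ≤ (2 ^ (n - k) * 2 ^ k) ^ (2 ^ k * s) :=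
      pow_ineq (2 ^ (n - k)) (2 ^ k) s Nat.one_le_two_pow
    have hchoose : n.choose k * 2 ^ k < 2 ^ s := by
      have h1 : n.choose k ≤ n ^ k := Nat.choose_le_pow n k
      have h2 : n ≤ 2 ^ L := Nat.le_pow_clog one_lt_two n
      have h3 : n ^ k ≤ (2 ^ L) ^ k := Nat.pow_le_pow_left h2 k
      have h4 : n.choose k * 2 ^ k ≤ 2 ^ (L * k) * 2 ^ k := by
        rw [← pow_mul] at h3
        exact Nat.mul_le_mul (h1.trans h3) le_rfl
      calc n.choose k * 2 ^ k ≤ 2 ^ (L * k + k) := by rw [pow_add]; exact h4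
        _ < 2 ^ s := by
            apply Nat.pow_lt_pow_right one_lt_two
            rw [hs, Nat.mul_comm k L]
            omega
    have hpos : 0 < (2 ^ n - 2 ^ (n - k)) ^ m := by
      apply Nat.pow_pos
      have : 2 ^ (n - k) < 2 ^ n := Nat.pow_lt_pow_right one_lt_two (by omega)
      omega
    calc n.choose k * (2 ^ k * (2 ^ n - 2 ^ (n - k)) ^ m)
        = n.choose k * 2 ^ k * (2 ^ n - 2 ^ (n - k)) ^ m := by ring
      _ < 2 ^ s * (2 ^ n - 2 ^ (n - k)) ^ m := by
          exact (Nat.mul_lt_mul_right hpos).2 hchoose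
      _ = 2 ^ s * (2 ^ (n - k) * (2 ^ k - 1)) ^ (2 ^ k * s) := by rw [hsub', hm]
      _ ≤ (2 ^ (n - k) * 2 ^ k) ^ (2 ^ k * s) := hB
      _ = (2 ^ n) ^ m := by rw [← h2n, hm]
  exact lt_irrefl _ (hle.trans_lt hlt)

lemma bound_real (n k : ℕ) (hk : 2 ≤ k) (hkn : k ≤ n) :
    ((2 ^ k * (k * Nat.clog 2 n + k + 1) : ℕ) : ℝ)
      ≤ 2 ^ k * (k : ℝ) ^ (3 * Real.logb 2 k) * Real.logb 2 n := by
  have hn2 : 2 ≤ n := hk.trans hkn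
  set L := Nat.clog 2 n with hL
  have hx1 : (1 : ℝ) ≤ Real.logb 2 n := by
    rw [show (1:ℝ) = Real.logb 2 2 by simp]
    exact Real.logb_le_logb_of_le one_lt_two (by norm_num) (by exact_mod_cast hn2)
  have hlogk : (1 : ℝ) ≤ Real.logb 2 k := by
    rw [show (1:ℝ) = Real.logb 2 2 by simp]
    exact Real.logb_le_logb_of_le one_lt_two (by norm_num) (by exact_mod_cast hk)
  have hL1 : 1 ≤ L := Nat.clog_pos one_lt_two hn2
  have hLlt : (L : ℝ) < Real.logb 2 n + 1 := by
    have hlt : 2 ^ (L - 1) < n := by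
      have := Nat.pow_pred_clog_lt_self (b := 2) one_lt_two (x := n) hn2
      simpa [Nat.pred_eq_sub_one] using this
    have h5 : Real.logb 2 ((2:ℝ) ^ (L - 1)) < Real.logb 2 n := by
      apply Real.logb_lt_logb one_lt_two (by positivity)
      exact_mod_cast hlt
    rw [Real.logb_pow, Real.logb_self_eq_one (by norm_num)] at h5
    have hcast : ((L - 1 : ℕ) : ℝ) = (L : ℝ) - 1 := by
      push_cast [Nat.cast_sub hL1]; ring
    rw [hcast, mul_one] at h5
    linarith
  have hk2 : (2 : ℝ) ≤ (k : ℝ) := by exact_mod_cast hk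
  have hstep1 : (k : ℝ) * L + k + 1 ≤ 4 * k * Real.logb 2 n := by
    nlinarith [hLlt, hx1, hk2]
  have hstep2 : 4 * (k:ℝ) ≤ (k : ℝ) ^ (3 * Real.logb 2 k) := by
    have h3 : (k:ℝ) ^ (3 * Real.logb 2 k) ≥ (k:ℝ) ^ (3:ℝ) := by
      apply Real.rpow_le_rpow_of_exponent_le (by linarith)
      nlinarith
    have h4 : (k:ℝ) ^ (3:ℝ) = (k:ℝ) ^ (3:ℕ) := by
      rw [← Real.rpow_natCast]; norm_num
    have h5 : 4 * (k:ℝ) ≤ (k:ℝ) ^ (3:ℕ) := by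
      nlinarith [mul_nonneg (sub_nonneg.2 hk2)
        (by positivity : (0:ℝ) ≤ (k:ℝ) * ((k:ℝ) + 2))]
    rw [h4] at h3
    linarith
  calc ((2 ^ k * (k * L + k + 1) : ℕ) : ℝ)
      = (2 : ℝ) ^ k * ((k : ℝ) * L + k + 1) := by push_cast; ring
    _ ≤ (2 : ℝ) ^ k * (4 * k * Real.logb 2 n) := by
        apply mul_le_mul_of_nonneg_left hstep1 (by positivity)
    _ ≤ (2 : ℝ) ^ k * ((k : ℝ) ^ (3 * Real.logb 2 k) * Real.logb 2 n) := by
        apply mul_le_mul_of_nonneg_left ?_ (by positivity)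
        apply mul_le_mul_of_nonneg_right hstep2 (by linarith)
    _ = 2 ^ k * (k : ℝ) ^ (3 * Real.logb 2 k) * Real.logb 2 n := by ring

/-- There exists an absolute constant `c > 0` such that for all integers
`n ≥ k ≥ 2` there exists an `(n, k)`-universal set `T ⊆ {0,1}^n` with
`|T| ≤ 2^k · k^(c·log₂ k) · log₂ n`.  Here an `(n,k)`-universal set is a set of
bitstrings of length `n` such that for every index set `S` of size `k`, the
projection of `T` onto `S` is all of `{0,1}^k`. -/
theorem universal_set_exists :
    ∃ c : ℝ, 0 < c ∧
      ∀ n k : ℕ, 2 ≤ k → k ≤ n →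
        ∃ T : Finset (Fin n → Bool),
          (∀ S : Finset (Fin n), S.card = k →
            ∀ f : Fin n → Bool, ∃ t ∈ T, ∀ i ∈ S, t i = f i) ∧
          (T.card : ℝ) ≤ 2 ^ k * (k : ℝ) ^ (c * Real.logb 2 k) * Real.logb 2 n := by
  refine ⟨3, by norm_num, fun n k hk hkn => ?_⟩
  obtain ⟨v, hv⟩ := exists_cover n k hk hkn
  refine ⟨Finset.image v Finset.univ, ?_, ?_⟩
  · intro S hS f
    obtain ⟨j, hj⟩ := hv S hS f
    exact ⟨v j, Finset.mem_image_of_mem _ (Finset.mem_univ j), hj⟩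
  · have h1 : (Finset.image v Finset.univ).card ≤ 2 ^ k * (k * Nat.clog 2 n + k + 1) := by
      calc (Finset.image v Finset.univ).card ≤ (Finset.univ : Finset (Fin _)).card :=
            Finset.card_image_le
        _ = 2 ^ k * (k * Nat.clog 2 n + k + 1) := by rw [Finset.card_univ, Fintype.card_fin]
    calc ((Finset.image v Finset.univ).card : ℝ)
        ≤ ((2 ^ k * (k * Nat.clog 2 n + k + 1) : ℕ) : ℝ) := by exact_mod_cast h1
      _ ≤ 2 ^ k * (k : ℝ) ^ (3 * Real.logb 2 k) * Real.logb 2 n := bound_real n k hk hkn
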